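/- Let (N,d) be a CAT(0) space, P,Q,R,S ∈ N, and let P_t = γ_{PS}(t) and Q_s = γ_{QR}(s) be constant-speed geodesics with γ_{PS}(0)=P, γ_{PS}(1)=S, γ_{QR}(0)=Q, γ_{QR}(1)=R. Let P̄,Q̄,R̄,S̄ ∈ ℝ² be a comparison quadrilateral (i.e., |P̄−Q̄| = d(P,Q), |Q̄−R̄| = d(Q,R), |R̄−S̄| = d(R,S), |S̄−P̄| = d(S,P), with the diagonals also dominating: |P̄−R̄| ≥ d(P,R), |Q̄−S̄| ≥ d(Q,S)), and set P̄_t = (1−t)P̄ + tS̄, Q̄_s = (1−s)Q̄ + sR̄. Then d(P_t, Q_s) ≤ |P̄_t − Q̄_s| for all t,s ∈ [0,1]. -/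

import Mathlib

/-- A constant-speed geodesic from `p` to `q`, parametrized on `[0,1]`. -/
def IsGeodesic {N : Type*} [MetricSpace N] (g : ℝ → N) (p q : N) : Prop :=
  g 0 = p ∧ g 1 = q ∧
    ∀ s ∈ Set.Icc (0:ℝ) 1, ∀ t ∈ Set.Icc (0:ℝ) 1, dist (g s) (g t) = |s - t| * dist p q

/-- A complete geodesic metric space is CAT(0) if every geodesic triangle is at least as
thin as its Euclidean comparison triangle; equivalently, along every geodesic `g` from
`p` to `q` the comparison inequality
`d(x, g t)² ≤ (1−t)d(x,p)² + t d(x,q)² − t(1−t)d(p,q)²` holds. -/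
def IsCAT0 (N : Type*) [MetricSpace N] [CompleteSpace N] : Prop :=
  (∀ p q : N, ∃ g : ℝ → N, IsGeodesic g p q) ∧
  ∀ (p q : N) (g : ℝ → N), IsGeodesic g p q → ∀ x : N, ∀ t ∈ Set.Icc (0:ℝ) 1,
    dist x (g t) ^ 2 ≤ (1 - t) * dist x p ^ 2 + t * dist x q ^ 2
      - t * (1 - t) * dist p q ^ 2

/-- Euclidean CN identity: `‖(1-t)u + tv‖² = (1-t)‖u‖² + t‖v‖² - t(1-t)‖u-v‖²`. -/
lemma euclid_cn {E : Type*} [NormedAddCommGroup E] [InnerProductSpace ℝ E]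
    (u v : E) (t : ℝ) :
    ‖(1 - t) • u + t • v‖ ^ 2
      = (1 - t) * ‖u‖ ^ 2 + t * ‖v‖ ^ 2 - t * (1 - t) * ‖u - v‖ ^ 2 := by
  have h : ∀ x : E, ‖x‖ ^ 2 = (inner ℝ x x : ℝ) := fun x =>
    (real_inner_self_eq_norm_sq x).symm
  rw [h, h, h, h]
  simp only [inner_add_left, inner_add_right, inner_sub_left, inner_sub_right,
    real_inner_smul_left, real_inner_smul_right, real_inner_comm u v]
  ring

/-- Quadrilateral comparison in a CAT(0) space (Korevaar–Schoen, Thm 2.1.2): for a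
quadrilateral `P,Q,R,S` with comparison quadrilateral `P̄,Q̄,R̄,S̄ ⊂ ℝ²` (same side
lengths, dominating diagonals), points on the geodesics `P_t` from `P` to `S` and `Q_s`
from `Q` to `R` satisfy `d(P_t, Q_s) ≤ |P̄_t − Q̄_s|`. -/
theorem cat0_quadrilateral_comparison {N : Type*} [MetricSpace N] [CompleteSpace N]
    (hN : IsCAT0 N) (P Q R S : N) (gPS gQR : ℝ → N)
    (hPS : IsGeodesic gPS P S) (hQR : IsGeodesic gQR Q R)
    (Pb Qb Rb Sb : EuclideanSpace ℝ (Fin 2))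
    (hPQ : dist Pb Qb = dist P Q) (hQR' : dist Qb Rb = dist Q R)
    (hRS : dist Rb Sb = dist R S) (hSP : dist Sb Pb = dist S P)
    (hPR : dist P R ≤ dist Pb Rb) (hQS : dist Q S ≤ dist Qb Sb)
    (t s : ℝ) (ht : t ∈ Set.Icc (0:ℝ) 1) (hs : s ∈ Set.Icc (0:ℝ) 1) :
    dist (gPS t) (gQR s) ≤ ‖((1 - t) • Pb + t • Sb) - ((1 - s) • Qb + s • Rb)‖ := by
  obtain ⟨ht0, ht1⟩ := ht
  obtain ⟨hs0, hs1⟩ := hs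
  -- CN inequalities in N
  have h1 := hN.2 P S gPS hPS (gQR s) t ⟨ht0, ht1⟩
  have h2 := hN.2 Q R gQR hQR P s ⟨hs0, hs1⟩
  have h3 := hN.2 Q R gQR hQR S s ⟨hs0, hs1⟩
  -- Euclidean identity applied three times
  set X := ((1 - s) • Qb + s • Rb) with hX
  have e1 : ((1 - t) • Pb + t • Sb) - X = (1 - t) • (Pb - X) + t • (Sb - X) := by
    rw [hX]; module
  have e2 : Pb - X = (1 - s) • (Pb - Qb) + s • (Pb - Rb) := by rw [hX]; module
  have e3 : Sb - X = (1 - s) • (Sb - Qb) + s • (Sb - Rb) := by rw [hX]; module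
  have E1 : ‖((1 - t) • Pb + t • Sb) - X‖ ^ 2
      = (1 - t) * ‖Pb - X‖ ^ 2 + t * ‖Sb - X‖ ^ 2
        - t * (1 - t) * ‖Pb - Sb‖ ^ 2 := by
    rw [e1, euclid_cn]; congr 2; abel
  have E2 : ‖Pb - X‖ ^ 2 = (1 - s) * ‖Pb - Qb‖ ^ 2 + s * ‖Pb - Rb‖ ^ 2
      - s * (1 - s) * ‖Qb - Rb‖ ^ 2 := by
    rw [e2, euclid_cn, show Pb - Qb - (Pb - Rb) = Rb - Qb from by abel,
      norm_sub_rev Rb Qb]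
  have E3 : ‖Sb - X‖ ^ 2 = (1 - s) * ‖Sb - Qb‖ ^ 2 + s * ‖Sb - Rb‖ ^ 2
      - s * (1 - s) * ‖Qb - Rb‖ ^ 2 := by
    rw [e3, euclid_cn, show Sb - Qb - (Sb - Rb) = Rb - Qb from by abel,
      norm_sub_rev Rb Qb]
  -- translate norms to dists
  have nPQ : ‖Pb - Qb‖ = dist P Q := by rw [← dist_eq_norm]; exact hPQ
  have nPR : dist P R ≤ ‖Pb - Rb‖ := by rw [← dist_eq_norm]; exact hPR
  have nSQ : dist Q S ≤ ‖Sb - Qb‖ := by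
    rw [← dist_eq_norm, dist_comm Sb Qb]; exact hQS
  have nSR : ‖Sb - Rb‖ = dist S R := by
    rw [← dist_eq_norm, dist_comm, hRS, dist_comm]
  have nPS : ‖Pb - Sb‖ = dist P S := by
    rw [← dist_eq_norm, dist_comm, hSP, dist_comm]
  have nQR : ‖Qb - Rb‖ = dist Q R := by rw [← dist_eq_norm]; exact hQR'
  -- squared inequalities for the diagonals, with nonneg coefficients
  have hPR2 : dist P R ^ 2 ≤ ‖Pb - Rb‖ ^ 2 := by
    apply pow_le_pow_left₀ dist_nonneg nPR
  have hSQ2 : dist Q S ^ 2 ≤ ‖Sb - Qb‖ ^ 2 := by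
    apply pow_le_pow_left₀ dist_nonneg nSQ
  have c1 : (0:ℝ) ≤ (1 - t) * s := mul_nonneg (by linarith) hs0
  have c2 : (0:ℝ) ≤ t * (1 - s) := mul_nonneg ht0 (by linarith)
  have m1 : (1 - t) * s * dist P R ^ 2 ≤ (1 - t) * s * ‖Pb - Rb‖ ^ 2 :=
    mul_le_mul_of_nonneg_left hPR2 c1
  have m2 : t * (1 - s) * dist Q S ^ 2 ≤ t * (1 - s) * ‖Sb - Qb‖ ^ 2 :=
    mul_le_mul_of_nonneg_left hSQ2 c2
  -- rewrite dists in h1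
  rw [dist_comm (gQR s) (gPS t), dist_comm (gQR s) P, dist_comm (gQR s) S] at h1
  -- combine into a square inequality
  have key : dist (gPS t) (gQR s) ^ 2 ≤ ‖((1 - t) • Pb + t • Sb) - X‖ ^ 2 := by
    have b1 : (0:ℝ) ≤ 1 - t := by linarith
    have c3 := mul_le_mul_of_nonneg_left h2 b1
    have c4 := mul_le_mul_of_nonneg_left h3 ht0
    rw [dist_comm S Q] at c4
    rw [E1, E2, E3, nPQ, nQR, nPS, nSR]
    linarith [c3, c4, m1, m2]
  have hnn : (0:ℝ) ≤ ‖((1 - t) • Pb + t • Sb) - X‖ := norm_nonneg _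
  have h' := Real.sqrt_le_sqrt key
  rwa [Real.sqrt_sq dist_nonneg, Real.sqrt_sq hnn] at h'
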